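/- For every odd prime p, ∑_{k=1}^{p-1} k^(p-1) ≡ p·B_{p-1} mod p² (as p-adic integers). -/

import Mathlib

open Finset IsUltrametricDist

private lemma chooseId (n i : ℕ) (h : i ≤ n) :
    (n+1).choose i * (n+1-i) = (n+1) * n.choose i := by
  have h2 := Nat.add_one_mul_choose_eq n (n-i)
  rw [Nat.choose_symm h] at h2
  rw [(by omega : n - i + 1 = n + 1 - i), Nat.choose_symm (by omega : i ≤ n + 1)] at h2
  simpa [mul_comm] using h2.symm

private lemma val_lt (p : ℕ) [hp : Fact p.Prime] (j : ℕ) (hj : j ≠ 0) : padicValNat p j < j := by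
  have h1 : p ^ padicValNat p j ≤ j := Nat.le_of_dvd (Nat.pos_of_ne_zero hj) pow_padicValNat_dvd
  calc padicValNat p j < 2 ^ padicValNat p j := Nat.lt_two_pow_self
    _ ≤ p ^ padicValNat p j := Nat.pow_le_pow_left hp.out.two_le _
    _ ≤ j := h1

private lemma norm_natCast_eq (p : ℕ) [hp : Fact p.Prime] (j : ℕ) (hj : j ≠ 0) :
    ‖(j : ℚ_[p])‖ = (p:ℝ) ^ (-(padicValNat p j : ℤ)) := by
  rw [Padic.norm_eq_zpow_neg_valuation (by exact_mod_cast hj), Padic.valuation_natCast]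

/-- Lemma A : `‖p^(j-1)/j‖ ≤ 1`. -/
private lemma normA (p : ℕ) [hp : Fact p.Prime] (j : ℕ) (hj : j ≠ 0) :
    ‖(p:ℚ_[p]) ^ (j-1) / (j : ℚ_[p])‖ ≤ 1 := by
  have hv := val_lt p j hj
  have hp0 : (0:ℝ) < p := by exact_mod_cast hp.out.pos
  rw [norm_div, Padic.norm_p_pow, norm_natCast_eq p j hj,
    div_le_one (by positivity)]
  apply zpow_le_zpow_right₀ (by exact_mod_cast hp.out.one_lt.le)
  omega

/-- Lemma B : `‖p * Bₙ‖ ≤ 1` (weak von Staudt–Clausen). -/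
private lemma normB (p : ℕ) [hp : Fact p.Prime] (n : ℕ) :
    ‖(p : ℚ_[p]) * (bernoulli n : ℚ_[p])‖ ≤ 1 := by
  induction n using Nat.strong_induction_on with
  | _ n ih =>
  have hm0 : ((n:ℚ)+1) ≠ 0 := by positivity
  have hQ := sum_range_pow p n
  rw [sum_range_succ] at hQ
  have hQ2 : (p:ℚ) * bernoulli n =
      (∑ k ∈ range p, (k:ℚ)^n) -
        ∑ i ∈ range n, bernoulli i * ((n+1).choose i) * (p:ℚ)^(n+1-i) / ((n:ℚ)+1) := by
    rw [hQ, Nat.choose_succ_self_right, (by omega : n + 1 - n = 1)]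
    push_cast
    field_simp
    ring
  have hC := congrArg (fun q : ℚ => (q : ℚ_[p])) hQ2
  push_cast at hC
  rw [hC]
  refine le_trans (by rw [sub_eq_add_neg]; exact (norm_add_le_max _ _).trans (by rw [norm_neg]))
    (max_le ?_ ?_)
  · refine norm_sum_le_of_forall_le_of_nonneg zero_le_one fun k _ => ?_
    rw [norm_pow]
    have : ‖(k:ℚ_[p])‖ ≤ 1 := by
      have := Padic.norm_int_le_one (p := p) (k : ℤ)
      simpa using this
    exact pow_le_one₀ (norm_nonneg _) this
  · refine norm_sum_le_of_forall_le_of_nonneg zero_le_one fun i hi => ?_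
    rw [mem_range] at hi
    have hN0 : ((n:ℚ_[p])+1) ≠ 0 := by
      have : (((n+1:ℕ)) : ℚ_[p]) ≠ 0 := Nat.cast_ne_zero.mpr (by omega)
      push_cast at this; exact this
    have hD0 : (((n+1-i:ℕ)) : ℚ_[p]) ≠ 0 := Nat.cast_ne_zero.mpr (by omega)
    have hnat : ((n+1).choose i : ℚ_[p]) * ((n+1-i:ℕ) : ℚ_[p]) = ((n:ℚ_[p])+1) * (n.choose i : ℚ_[p]) := by
      have := congrArg (fun t : ℕ => (t : ℚ_[p])) (chooseId n i hi.le)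
      push_cast at this
      exact this
    have hrw : (bernoulli i : ℚ_[p]) * ((n+1).choose i : ℚ_[p]) * ((p:ℚ_[p]))^(n+1-i) / ((n:ℚ_[p])+1)
        = ((p:ℚ_[p]) * (bernoulli i : ℚ_[p])) * (n.choose i : ℚ_[p]) *
          ((p:ℚ_[p])^(n-i) / ((n+1-i:ℕ) : ℚ_[p])) := by
      have he : n + 1 - i = (n-i) + 1 := by omega
      rw [he] at hnat
      rw [he, pow_succ, ← mul_div_assoc]
      rw [div_eq_div_iff hN0 (show (((n-i)+1:ℕ):ℚ_[p]) ≠ 0 from Nat.cast_ne_zero.mpr (by omega))]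
      linear_combination ((bernoulli i : ℚ_[p]) * (p:ℚ_[p])^(n-i) * (p:ℚ_[p])) * hnat
    rw [hrw, norm_mul, norm_mul]
    have h1 : ‖(p:ℚ_[p]) * (bernoulli i : ℚ_[p])‖ ≤ 1 := ih i hi
    have h2 : ‖(n.choose i : ℚ_[p])‖ ≤ 1 := by
      have := Padic.norm_int_le_one (p := p) ((n.choose i : ℕ) : ℤ)
      simpa using this
    have h3 : ‖(p:ℚ_[p])^(n-i) / ((n+1-i:ℕ) : ℚ_[p])‖ ≤ 1 := by
      have := normA p (n+1-i) (by omega)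
      rwa [(by omega : n + 1 - i - 1 = n - i)] at this
    calc ‖(p:ℚ_[p]) * _‖ * ‖(n.choose i : ℚ_[p])‖ * ‖(p:ℚ_[p])^(n-i) / ((n+1-i:ℕ) : ℚ_[p])‖
        ≤ 1 * 1 * 1 := by gcongr
      _ = 1 := by norm_num


private lemma norm_natCast_one (p : ℕ) [hp : Fact p.Prime] (d : ℕ) (hnd : ¬ p ∣ d) :
    ‖(d : ℚ_[p])‖ = 1 := by
  refine le_antisymm (by simpa using Padic.norm_int_le_one (p := p) (d : ℤ)) ?_
  refine le_of_not_gt fun hlt => hnd ?_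
  exact_mod_cast (Padic.norm_intCast_lt_one_iff (p := p) (k := (d : ℤ))).mp (by simpa using hlt)

theorem stmt_4 (p : ℕ) [hp : Fact p.Prime] (hodd : Odd p) :
    ∃ z : ℤ_[p], (∑ k ∈ Finset.Icc 1 (p - 1), (k : ℚ_[p]) ^ (p - 1)) =
      (p : ℚ_[p]) * (bernoulli (p - 1) : ℚ_[p]) + (p : ℚ_[p]) ^ 2 * z := by
  have hpos := hp.out.pos
  obtain ⟨m, rfl⟩ : ∃ m, p = m + 1 := ⟨p - 1, by omega⟩
  have hpp := hp.out
  have hm2 : 2 ≤ m := by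
    by_contra h
    interval_cases m
    · exact absurd hpp (by norm_num)
    · exact absurd hodd (by decide)
  simp only [Nat.add_sub_cancel]
  set P : ℚ_[m+1] := ((m+1 : ℕ) : ℚ_[m+1]) with hPdef
  have hP0 : P ≠ 0 := Nat.cast_ne_zero.mpr (by omega)
  set r : ℝ := ((m+1 : ℕ) : ℝ) with hrdef
  have hr1 : (1:ℝ) < r := by rw [hrdef]; exact_mod_cast hpp.one_lt
  have hr0 : (0:ℝ) < r := lt_trans one_pos hr1
  -- the rational identity
  have hQ := sum_range_pow (m+1) m
  nth_rewrite 2 [sum_range_succ] at hQ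
  have hlast : bernoulli m * (((m+1).choose m : ℕ) : ℚ) * ((m+1:ℕ):ℚ)^(m+1-m) / ((m:ℚ)+1)
      = ((m:ℚ)+1) * bernoulli m := by
    rw [Nat.choose_succ_self_right, (by omega : m+1-m = 1), pow_one]
    push_cast
    field_simp
  have hQ2 : (∑ k ∈ range (m+1), (k:ℚ)^m) - ((m:ℚ)+1) * bernoulli m =
      ∑ i ∈ range m, bernoulli i * (((m+1).choose i : ℕ) : ℚ) * ((m+1:ℕ):ℚ)^(m+1-i) / ((m:ℚ)+1) := by
    rw [hQ, hlast]; ring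
  have hC := congrArg (fun q : ℚ => (q : ℚ_[m+1])) hQ2
  push_cast at hC
  have hP : ((m:ℚ_[m+1])+1) = P := by rw [hPdef]; push_cast; ring
  rw [hP] at hC
  set T : ℚ_[m+1] :=
    ∑ i ∈ range m, (bernoulli i : ℚ_[m+1]) * (((m+1).choose i : ℕ) : ℚ_[m+1]) * P^(m+1-i) / P
    with hTdef
  -- bound on ‖T‖
  have hT : ‖T‖ ≤ r ^ (-2 : ℤ) := by
    refine norm_sum_le_of_forall_le_of_nonneg (by positivity) fun i hi => ?_
    rw [mem_range] at hi
    rcases Nat.eq_zero_or_pos i with rfl | hipos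
    · simp only [bernoulli_zero, Rat.cast_one, Nat.choose_zero_right, Nat.cast_one, one_mul,
        Nat.sub_zero]
      rw [pow_succ, mul_div_assoc, div_self hP0, mul_one, hPdef, Padic.norm_p_pow]
      exact zpow_le_zpow_right₀ hr1.le (by omega)
    · have hnat : (((m+1).choose i : ℕ) : ℚ_[m+1]) * ((m+1-i:ℕ) : ℚ_[m+1])
          = P * ((m.choose i : ℕ) : ℚ_[m+1]) := by
        rw [hPdef]
        exact_mod_cast congrArg (fun t : ℕ => (t : ℚ_[m+1])) (chooseId m i hi.le)
      have he : m + 1 - i = (m-i) + 1 := by omega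
      rw [he] at hnat
      have hrw : (bernoulli i : ℚ_[m+1]) * (((m+1).choose i : ℕ) : ℚ_[m+1]) * P^(m+1-i) / P
          = (P * (bernoulli i : ℚ_[m+1])) * ((m.choose i : ℕ) : ℚ_[m+1]) *
            (P^(m-i) / (((m-i)+1 : ℕ) : ℚ_[m+1])) := by
        rw [he, pow_succ, ← mul_div_assoc]
        rw [div_eq_div_iff hP0 (show (((m-i)+1:ℕ):ℚ_[m+1]) ≠ 0 from Nat.cast_ne_zero.mpr (by omega))]
        linear_combination ((bernoulli i : ℚ_[m+1]) * P^(m-i) * P) * hnat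
      rw [hrw, norm_mul, norm_mul]
      have h2 : ‖((m.choose i : ℕ) : ℚ_[m+1])‖ ≤ 1 := by
        simpa using Padic.norm_int_le_one (p := m+1) ((m.choose i : ℕ) : ℤ)
      rcases eq_or_lt_of_le (show i ≤ m - 1 by omega) with hieq | hilt
      · -- i = m - 1
        have hmi : m - i = 1 := by omega
        have hbound : ‖(bernoulli i : ℚ_[m+1])‖ ≤ 1 := by
          rcases eq_or_lt_of_le hm2 with hm2' | hm4
          · -- m = 2, i = 1
            have : i = 1 := by omega
            rw [this, bernoulli_one]
            have h2n : ‖((2:ℕ) : ℚ_[m+1])‖ = 1 := by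
              refine norm_natCast_one (m+1) 2 fun hdvd => ?_
              have := Nat.le_of_dvd (by norm_num) hdvd
              omega
            push_cast
            rw [norm_div, norm_neg, norm_one]
            rw [show ((2:ℚ_[m+1])) = ((2:ℕ) : ℚ_[m+1]) by push_cast; ring, h2n]
            norm_num
          · -- m ≥ 3; m is even since m+1 odd, so m ≥ 4 and i = m-1 ≥ 3 is odd
            obtain ⟨t, ht⟩ := hodd
            have hiodd : Odd i := ⟨t - 1, by omega⟩
            rw [bernoulli_eq_bernoulli'_of_ne_one (by omega),
              bernoulli'_eq_zero_of_odd hiodd (by omega)]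
            simp
        have hnd : ¬ (m+1) ∣ (1+1) := by
          intro hdvd
          have := Nat.le_of_dvd (by norm_num) hdvd
          omega
        rw [hmi, pow_one]
        rw [norm_div, norm_mul, norm_natCast_one (m+1) _ hnd, hPdef, Padic.norm_p]
        calc r⁻¹ * ‖(bernoulli i : ℚ_[m+1])‖ * ‖((m.choose i : ℕ) : ℚ_[m+1])‖ * (r⁻¹ / 1)
            ≤ r⁻¹ * 1 * 1 * (r⁻¹ / 1) := by gcongr
          _ = r ^ (-2:ℤ) := by
              rw [div_one, mul_one, mul_one, ← zpow_neg_one, ← zpow_add₀ (ne_of_gt hr0)]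
              norm_num
      · -- 1 ≤ i ≤ m - 2
        have h1 : ‖P * (bernoulli i : ℚ_[m+1])‖ ≤ 1 := by
          rw [hPdef]; exact normB (m+1) i
        have hnd : ¬ (m+1) ∣ ((m-i)+1) := by
          intro hdvd
          have := Nat.le_of_dvd (by norm_num) hdvd
          omega
        have h3 : ‖P^(m-i) / (((m-i)+1 : ℕ) : ℚ_[m+1])‖ ≤ r ^ (-2:ℤ) := by
          rw [norm_div, norm_natCast_one (m+1) _ hnd, div_one, hPdef, Padic.norm_p_pow]
          exact zpow_le_zpow_right₀ hr1.le (by omega)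
        calc ‖P * (bernoulli i : ℚ_[m+1])‖ * ‖((m.choose i : ℕ) : ℚ_[m+1])‖ *
              ‖P^(m-i) / (((m-i)+1 : ℕ) : ℚ_[m+1])‖
            ≤ 1 * 1 * (r ^ (-2:ℤ)) := by gcongr
          _ = r ^ (-2:ℤ) := by ring
  -- assemble
  have hS : (∑ k ∈ Icc 1 m, (k:ℚ_[m+1])^m) = ∑ k ∈ range (m+1), (k:ℚ_[m+1])^m := by
    rw [show range (m+1) = insert 0 (Icc 1 m) from by
      ext x; simp only [mem_range, mem_insert, mem_Icc]; omega]
    rw [sum_insert (by simp)]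
    simp only [Nat.cast_zero, zero_pow (show m ≠ 0 by omega), zero_add]
  have hz : ‖T / P^2‖ ≤ 1 := by
    rw [norm_div, div_le_one (by rw [norm_pos_iff]; exact pow_ne_zero 2 hP0)]
    calc ‖T‖ ≤ r ^ (-2:ℤ) := hT
      _ = ‖P^2‖ := by
          rw [hPdef, Padic.norm_p_pow, hrdef]
          norm_num
  refine ⟨⟨T / P^2, hz⟩, ?_⟩
  rw [show (((⟨T / P^2, hz⟩ : ℤ_[m+1]) : ℤ_[m+1]) : ℚ_[m+1]) = T / P^2 from rfl]
  rw [hS, mul_div_cancel₀ _ (pow_ne_zero 2 hP0)]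
  linear_combination hC
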